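/- Let T be an ordered tournament with positive integer weights w on its backward arcs such that every interval I satisfies 2*w(I) <= |I| - 1, where w(I) is the total weight of backward arcs with both endpoints in I. Then for each backward arc f = vu one can choose a collection C(f) of w(f) directed paths from u to v, each using only forward arcs within the span of f, such that all paths over all backward arcs are pairwise arc-disjoint. -/

import Mathlib

/-- A tournament: irreflexive, and exactly one arc between every pair of distinct vertices. -/
def IsTournament {V : Type*} (r : V → V → Prop) : Prop :=
  (∀ v, ¬ r v v) ∧ ∀ u v : V, u ≠ v → (r u v ↔ ¬ r v u)

/-- A digraph (given by its arc relation) is acyclic: no directed cycle. -/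
def Acyclic {V : Type*} (r : V → V → Prop) : Prop :=
  ∀ v, ¬ Relation.TransGen r v v

namespace Stmt13Aux

variable {n : ℕ} (r : Fin n → Fin n → Prop) [DecidableRel r]

/-- Backward pairs fully inside the interval `[a,b]`. -/
def bwdIn (a b : Fin n) : Finset (Fin n × Fin n) :=
  Finset.univ.filter (fun p => r p.1 p.2 ∧ p.2 < p.1 ∧ a ≤ p.2 ∧ p.1 ≤ b)

/-- Used (forward) pairs fully inside `[a,b]`. -/
def kIn (K : Finset (Fin n × Fin n)) (a b : Fin n) : Finset (Fin n × Fin n) :=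
  K.filter (fun k => a ≤ k.1 ∧ k.2 ≤ b)

/-- Interval load: twice remaining weight plus used pairs, inside `[a,b]`. -/
def SS (rem : Fin n × Fin n → ℕ) (K : Finset (Fin n × Fin n)) (a b : Fin n) : ℕ :=
  2 * ∑ p ∈ bwdIn r a b, rem p + (kIn K a b).card

lemma mem_bwdIn {a b : Fin n} {p : Fin n × Fin n} :
    p ∈ bwdIn r a b ↔ r p.1 p.2 ∧ p.2 < p.1 ∧ a ≤ p.2 ∧ p.1 ≤ b := by simp [bwdIn]

lemma mem_kIn {K : Finset (Fin n × Fin n)} {a b : Fin n} {k : Fin n × Fin n} :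
    k ∈ kIn K a b ↔ k ∈ K ∧ a ≤ k.1 ∧ k.2 ≤ b := by simp [kIn]

lemma SS_self (rem : Fin n × Fin n → ℕ) (K : Finset (Fin n × Fin n))
    (hKord : ∀ k ∈ K, k.1 < k.2) (x : Fin n) : SS r rem K x x = 0 := by
  have h1 : bwdIn r x x = ∅ := by
    ext p
    simp only [mem_bwdIn, Finset.notMem_empty, iff_false]
    rintro ⟨-, hlt, hx1, hx2⟩
    exact absurd (lt_of_lt_of_le hlt hx2) (not_lt.2 hx1)
  have h2 : kIn K x x = ∅ := by
    ext k
    simp only [mem_kIn, Finset.notMem_empty, iff_false]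
    rintro ⟨hk, hx1, hx2⟩
    exact absurd (lt_of_lt_of_le (hKord k hk) hx2) (not_lt.2 hx1)
  simp [SS, h1, h2]

lemma bwdIn_mono {a b a' b' : Fin n} (ha : a' ≤ a) (hb : b ≤ b') :
    bwdIn r a b ⊆ bwdIn r a' b' := by
  intro p hp
  rw [mem_bwdIn] at hp ⊢
  exact ⟨hp.1, hp.2.1, le_trans ha hp.2.2.1, le_trans hp.2.2.2 hb⟩

lemma kIn_mono {K : Finset (Fin n × Fin n)} {a b a' b' : Fin n} (ha : a' ≤ a) (hb : b ≤ b') :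
    kIn K a b ⊆ kIn K a' b' := by
  intro k hk
  rw [mem_kIn] at hk ⊢
  exact ⟨hk.1, le_trans ha hk.2.1, le_trans hk.2.2 hb⟩

/-- Witness data for a fully-routed backward pair. -/
def W1 (K : Finset (Fin n × Fin n)) (mh : Fin n × Fin n → Fin n) (p : Fin n × Fin n) : Prop :=
  p.2 < mh p ∧ mh p < p.1 ∧ (p.2, mh p) ∈ K ∧ (mh p, p.1) ∈ K

/-- Distinctness of witness arcs of two distinct fully-routed pairs. -/
def W2 (mh : Fin n × Fin n → Fin n) (p q : Fin n × Fin n) : Prop :=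
  (p.2, mh p) ≠ (q.2, mh q) ∧ (p.2, mh p) ≠ (mh q, q.1) ∧
  (mh p, p.1) ≠ (q.2, mh q) ∧ (mh p, p.1) ≠ (mh q, q.1)

lemma Lwit (rem : Fin n × Fin n → ℕ) (K : Finset (Fin n × Fin n))
    (hKord : ∀ k ∈ K, k.1 < k.2)
    (hINV : ∀ a b : Fin n, (a : ℕ) ≤ (b : ℕ) → SS r rem K a b + (a : ℕ) ≤ (b : ℕ))
    (t h : Fin n) (hth : t < h) :
    ∃ a₀ β : Fin n, a₀ ≤ t ∧ t ≤ β ∧ β < h ∧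
      SS r rem K a₀ β + (a₀ : ℕ) = (β : ℕ) ∧
      (∀ a b : Fin n, a ≤ t → t < b → b < h → β < b →
        SS r rem K a b + (a : ℕ) + 1 ≤ (b : ℕ)) := by
  classical
  set Lset : Finset (Fin n) :=
    Finset.univ.filter (fun b => t < b ∧ b < h ∧
      ∃ a : Fin n, a ≤ t ∧ SS r rem K a b + (a : ℕ) = (b : ℕ)) with hLset
  have hmem : ∀ b : Fin n, b ∈ Lset ↔ (t < b ∧ b < h ∧
      ∃ a : Fin n, a ≤ t ∧ SS r rem K a b + (a : ℕ) = (b : ℕ)) := by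
    intro b; simp [hLset]
  have hstrict : ∀ a b : Fin n, a ≤ t → t < b → b < h → b ∉ Lset →
      SS r rem K a b + (a : ℕ) + 1 ≤ (b : ℕ) := by
    intro a b hat htb hbh hnb
    have hab : (a : ℕ) ≤ (b : ℕ) := le_of_lt (lt_of_le_of_lt hat htb)
    have h1 := hINV a b hab
    rcases eq_or_lt_of_le h1 with heq | hlt
    · exact absurd ((hmem b).2 ⟨htb, hbh, a, hat, heq⟩) hnb
    · omega
  rcases Lset.eq_empty_or_nonempty with hem | hne
  · refine ⟨t, t, le_refl _, le_refl _, hth, by simp [SS_self r rem K hKord], ?_⟩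
    intro a b hat htb hbh _
    exact hstrict a b hat htb hbh (by simp [hem])
  · set β := Lset.max' hne with hβ
    have hβmem := Lset.max'_mem hne
    rw [hmem] at hβmem
    obtain ⟨htβ, hβh, a₀, ha₀t, htight⟩ := hβmem
    refine ⟨a₀, β, ha₀t, le_of_lt htβ, hβh, htight, ?_⟩
    intro a b hat htb hbh hβb
    refine hstrict a b hat htb hbh (fun hb => ?_)
    exact absurd (Finset.le_max' _ _ hb) (not_le.2 hβb)

lemma Rwit (rem : Fin n × Fin n → ℕ) (K : Finset (Fin n × Fin n))
    (hKord : ∀ k ∈ K, k.1 < k.2)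
    (hINV : ∀ a b : Fin n, (a : ℕ) ≤ (b : ℕ) → SS r rem K a b + (a : ℕ) ≤ (b : ℕ))
    (t h : Fin n) (hth : t < h) :
    ∃ α b₀ : Fin n, h ≤ b₀ ∧ α ≤ h ∧ t < α ∧
      SS r rem K α b₀ + (α : ℕ) = (b₀ : ℕ) ∧
      (∀ a b : Fin n, t < a → a < h → a < α → h ≤ b →
        SS r rem K a b + (a : ℕ) + 1 ≤ (b : ℕ)) := by
  classical
  set Rset : Finset (Fin n) :=
    Finset.univ.filter (fun a => t < a ∧ a < h ∧
      ∃ b : Fin n, h ≤ b ∧ SS r rem K a b + (a : ℕ) = (b : ℕ)) with hRset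
  have hmem : ∀ a : Fin n, a ∈ Rset ↔ (t < a ∧ a < h ∧
      ∃ b : Fin n, h ≤ b ∧ SS r rem K a b + (a : ℕ) = (b : ℕ)) := by
    intro a; simp [hRset]
  have hstrict : ∀ a b : Fin n, t < a → a < h → h ≤ b → a ∉ Rset →
      SS r rem K a b + (a : ℕ) + 1 ≤ (b : ℕ) := by
    intro a b hta hah hhb hna
    have hab : (a : ℕ) ≤ (b : ℕ) := le_of_lt (lt_of_lt_of_le hah hhb)
    have h1 := hINV a b hab
    rcases eq_or_lt_of_le h1 with heq | hlt
    · exact absurd ((hmem a).2 ⟨hta, hah, b, hhb, heq⟩) hna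
    · omega
  rcases Rset.eq_empty_or_nonempty with hem | hne
  · refine ⟨h, h, le_refl _, le_refl _, hth, by simp [SS_self r rem K hKord], ?_⟩
    intro a b hta hah _ hhb
    exact hstrict a b hta hah hhb (by simp [hem])
  · set α := Rset.min' hne with hα
    have hαmem := Rset.min'_mem hne
    rw [hmem] at hαmem
    obtain ⟨htα, hαh, b₀, hhb₀, htight⟩ := hαmem
    refine ⟨α, b₀, hhb₀, le_of_lt hαh, htα, htight, ?_⟩
    intro a b hta hah haα hhb
    refine hstrict a b hta hah hhb (fun ha => ?_)
    exact absurd (Finset.min'_le _ _ ha) (not_le.2 haα)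

lemma count_parts (rem : Fin n × Fin n → ℕ) (K : Finset (Fin n × Fin n))
    (hKord : ∀ k ∈ K, k.1 < k.2)
    (f : Fin n × Fin n) (hfb : r f.1 f.2) (hflt : f.2 < f.1)
    (a₀ β α b₀ : Fin n) (ha₀t : a₀ ≤ f.2) (hβ : (β:ℕ) < (f.1:ℕ)) (hβα : (β:ℕ) < (α:ℕ))
    (hα : (f.2:ℕ) < (α:ℕ)) (hb₀ : f.1 ≤ b₀) :
    ∑ p ∈ bwdIn r a₀ β, rem p + ∑ p ∈ bwdIn r α b₀, rem p + rem f
      ≤ ∑ p ∈ bwdIn r a₀ b₀, rem p ∧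
    Disjoint (kIn K a₀ β) (kIn K α b₀) ∧
    kIn K a₀ β ∪ kIn K α b₀ ⊆ kIn K a₀ b₀ := by
  have hsub : (bwdIn r a₀ β ∪ bwdIn r α b₀) ∪ {f} ⊆ bwdIn r a₀ b₀ := by
    intro p hp
    rcases Finset.mem_union.1 hp with hp | hp
    · rcases Finset.mem_union.1 hp with hp | hp
      · rw [mem_bwdIn] at hp ⊢
        obtain ⟨h1, h2, h3, h4⟩ := hp
        refine ⟨h1, h2, h3, le_trans h4 ?_⟩
        exact (Fin.le_def).2 (by have := (Fin.le_def).1 hb₀; omega)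
      · rw [mem_bwdIn] at hp ⊢
        obtain ⟨h1, h2, h3, h4⟩ := hp
        refine ⟨h1, h2, le_trans ?_ h3, h4⟩
        exact (Fin.le_def).2 (by have := (Fin.le_def).1 ha₀t; omega)
    · rw [Finset.mem_singleton] at hp
      subst hp
      rw [mem_bwdIn]
      exact ⟨hfb, hflt, ha₀t, hb₀⟩
  have hdisj1 : Disjoint (bwdIn r a₀ β) (bwdIn r α b₀) := by
    rw [Finset.disjoint_left]
    intro p hp1 hp2
    rw [mem_bwdIn] at hp1 hp2
    have h1 : (p.1:ℕ) ≤ β := (Fin.le_def).1 hp1.2.2.2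
    have h2 : (α:ℕ) ≤ (p.2:ℕ) := (Fin.le_def).1 hp2.2.2.1
    have h3 : (p.2:ℕ) < (p.1:ℕ) := (Fin.lt_def).1 hp1.2.1
    omega
  have hdisj2 : Disjoint (bwdIn r a₀ β ∪ bwdIn r α b₀) ({f} : Finset _) := by
    rw [Finset.disjoint_right]
    intro p hp hpu
    rw [Finset.mem_singleton] at hp; subst hp
    rcases Finset.mem_union.1 hpu with hp | hp
    · rw [mem_bwdIn] at hp
      have := (Fin.le_def).1 hp.2.2.2; omega
    · rw [mem_bwdIn] at hp
      have h2 := (Fin.le_def).1 hp.2.2.1; omega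
  refine ⟨?_, ?_, ?_⟩
  · calc ∑ p ∈ bwdIn r a₀ β, rem p + ∑ p ∈ bwdIn r α b₀, rem p + rem f
        = ∑ p ∈ (bwdIn r a₀ β ∪ bwdIn r α b₀) ∪ {f}, rem p := by
          rw [Finset.sum_union hdisj2, Finset.sum_union hdisj1, Finset.sum_singleton]
      _ ≤ _ := Finset.sum_le_sum_of_subset hsub
  · rw [Finset.disjoint_left]
    intro k hk1 hk2
    rw [mem_kIn] at hk1 hk2
    have h1 : (k.2:ℕ) ≤ β := (Fin.le_def).1 hk1.2.2
    have h2 : (α:ℕ) ≤ (k.1:ℕ) := (Fin.le_def).1 hk2.2.1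
    have h3 : (k.1:ℕ) < (k.2:ℕ) := (Fin.lt_def).1 (hKord k hk1.1)
    omega
  · intro k hk
    rcases Finset.mem_union.1 hk with hk | hk <;> rw [mem_kIn] at hk ⊢
    · obtain ⟨h1, h2, h3⟩ := hk
      exact ⟨h1, h2, le_trans h3 ((Fin.le_def).2 (by have := (Fin.le_def).1 hb₀; omega))⟩
    · obtain ⟨h1, h2, h3⟩ := hk
      exact ⟨h1, le_trans ((Fin.le_def).2 (by have := (Fin.le_def).1 ha₀t; omega)) h2, h3⟩

lemma beta_lt_alpha (rem : Fin n × Fin n → ℕ) (K : Finset (Fin n × Fin n))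
    (hINV : ∀ a b : Fin n, (a : ℕ) ≤ (b : ℕ) → SS r rem K a b + (a : ℕ) ≤ (b : ℕ))
    (f : Fin n × Fin n) (hfb : r f.1 f.2) (hflt : f.2 < f.1) (hfpos : 0 < rem f)
    (a₀ β α b₀ : Fin n) (ha₀t : a₀ ≤ f.2) (htβ : f.2 ≤ β) (hβh : β < f.1)
    (hhb₀ : f.1 ≤ b₀) (hαh : α ≤ f.1) (htα : f.2 < α)
    (hLtight : SS r rem K a₀ β + (a₀ : ℕ) = (β : ℕ))
    (hRtight : SS r rem K α b₀ + (α : ℕ) = (b₀ : ℕ)) :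
    (β : ℕ) < (α : ℕ) := by
  by_contra hcon
  push_neg at hcon
  have hαβ : α ≤ β := (Fin.le_def).2 hcon
  have ha₀α : a₀ ≤ α := le_trans ha₀t (le_of_lt htα)
  have hβb₀ : β ≤ b₀ := le_trans (le_of_lt hβh) hhb₀
  have hsum := Finset.sum_union_inter (s₁ := bwdIn r a₀ β) (s₂ := bwdIn r α b₀) (f := rem)
  have hcap : bwdIn r a₀ β ∩ bwdIn r α b₀ ⊆ bwdIn r α β := by
    intro p hp
    rw [Finset.mem_inter] at hp
    obtain ⟨h1, h2⟩ := hp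
    rw [mem_bwdIn] at h1 h2 ⊢
    exact ⟨h1.1, h1.2.1, h2.2.2.1, h1.2.2.2⟩
  have hcup : bwdIn r a₀ β ∪ bwdIn r α b₀ ⊆ bwdIn r a₀ b₀ := by
    intro p hp
    rcases Finset.mem_union.1 hp with hp | hp
    · exact bwdIn_mono r (le_refl _) hβb₀ hp
    · exact bwdIn_mono r ha₀α (le_refl _) hp
  have hfnot : f ∉ bwdIn r a₀ β ∪ bwdIn r α b₀ := by
    intro hp
    rcases Finset.mem_union.1 hp with hp | hp <;> rw [mem_bwdIn] at hp
    · have := (Fin.le_def).1 hp.2.2.2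
      have h2 := (Fin.lt_def).1 hβh; omega
    · have := (Fin.le_def).1 hp.2.2.1
      have h2 := (Fin.lt_def).1 htα; omega
  have hcupf : ∑ p ∈ bwdIn r a₀ β ∪ bwdIn r α b₀, rem p + rem f
      ≤ ∑ p ∈ bwdIn r a₀ b₀, rem p := by
    have hss : (bwdIn r a₀ β ∪ bwdIn r α b₀) ∪ {f} ⊆ bwdIn r a₀ b₀ := by
      intro p hp
      rcases Finset.mem_union.1 hp with hp | hp
      · exact hcup hp
      · rw [Finset.mem_singleton] at hp; subst hp
        rw [mem_bwdIn]; exact ⟨hfb, hflt, ha₀t, hhb₀⟩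
    calc ∑ p ∈ bwdIn r a₀ β ∪ bwdIn r α b₀, rem p + rem f
        = ∑ p ∈ (bwdIn r a₀ β ∪ bwdIn r α b₀) ∪ {f}, rem p := by
          rw [Finset.sum_union (Finset.disjoint_singleton_right.2 hfnot),
            Finset.sum_singleton]
      _ ≤ _ := Finset.sum_le_sum_of_subset hss
  have hcapsum : ∑ p ∈ bwdIn r a₀ β ∩ bwdIn r α b₀, rem p ≤ ∑ p ∈ bwdIn r α β, rem p :=
    Finset.sum_le_sum_of_subset hcap
  have hcard := Finset.card_union_add_card_inter (kIn K a₀ β) (kIn K α b₀)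
  have hkcup : (kIn K a₀ β ∪ kIn K α b₀).card ≤ (kIn K a₀ b₀).card := by
    apply Finset.card_le_card
    intro k hk
    rcases Finset.mem_union.1 hk with hk | hk
    · exact kIn_mono (le_refl _) hβb₀ hk
    · exact kIn_mono ha₀α (le_refl _) hk
  have hkcap : (kIn K a₀ β ∩ kIn K α b₀).card ≤ (kIn K α β).card := by
    apply Finset.card_le_card
    intro k hk
    rw [Finset.mem_inter] at hk
    obtain ⟨h1, h2⟩ := hk
    rw [mem_kIn] at h1 h2 ⊢
    exact ⟨h1.1, h2.2.1, h1.2.2⟩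
  have hJ := hINV a₀ b₀ (by
    have h1 := (Fin.le_def).1 ha₀t
    have h2 := (Fin.le_def).1 hhb₀
    have h3 := (Fin.lt_def).1 hflt; omega)
  have hI := hINV α β hcon
  simp only [SS] at hJ hI hLtight hRtight
  omega

lemma charge_cases
    (hT : (∀ v, ¬ r v v) ∧ ∀ u v : Fin n, u ≠ v → (r u v ↔ ¬ r v u))
    (rem : Fin n × Fin n → ℕ) (K : Finset (Fin n × Fin n)) (mh : Fin n × Fin n → Fin n)
    (hW1 : ∀ p : Fin n × Fin n, r p.1 p.2 → p.2 < p.1 → rem p = 0 → W1 K mh p)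
    (f : Fin n × Fin n) (hflt : f.2 < f.1)
    (hmin : ∀ p : Fin n × Fin n, r p.1 p.2 → p.2 < p.1 → 0 < rem p →
      (f.1 : ℕ) - (f.2 : ℕ) ≤ (p.1 : ℕ) - (p.2 : ℕ))
    (m : Fin n) (hum : f.2 < m) (hmv : m < f.1)
    (hng : ¬ (r f.2 m ∧ r m f.1 ∧ (f.2, m) ∉ K ∧ (m, f.1) ∉ K)) :
    ((f.2, m) ∈ K) ∨
    ((f.2, m) ∉ K ∧ (m, f.1) ∈ K) ∨
    ((f.2, m) ∉ K ∧ (m, f.1) ∉ K ∧ r f.2 m ∧ r f.1 m ∧ rem (f.1, m) = 0 ∧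
      m < mh (f.1, m) ∧ mh (f.1, m) < f.1 ∧ (m, mh (f.1, m)) ∈ K) ∨
    ((f.2, m) ∉ K ∧ (m, f.1) ∉ K ∧ ¬ r f.2 m ∧ r m f.2 ∧ rem (m, f.2) = 0 ∧
      f.2 < mh (m, f.2) ∧ mh (m, f.2) < m ∧ (mh (m, f.2), m) ∈ K) := by
  by_cases h1 : (f.2, m) ∈ K
  · exact Or.inl h1
  by_cases h2 : (m, f.1) ∈ K
  · exact Or.inr (Or.inl ⟨h1, h2⟩)
  by_cases h3 : r f.2 m
  · have h4 : ¬ r m f.1 := by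
      intro h4; exact hng ⟨h3, h4, h1, h2⟩
    have hne : f.1 ≠ m := (ne_of_lt hmv).symm
    have h5 : r f.1 m := (hT.2 f.1 m hne).2 (by intro h6; exact h4 h6)
    have h0 : rem (f.1, m) = 0 := by
      by_contra h0
      have := hmin (f.1, m) h5 hmv (Nat.pos_of_ne_zero h0)
      simp only at this
      have e1 := (Fin.lt_def).1 hum
      have e2 := (Fin.lt_def).1 hmv
      have e3 := (Fin.lt_def).1 hflt
      omega
    obtain ⟨w1, w2, w3, w4⟩ := hW1 (f.1, m) h5 hmv h0
    exact Or.inr (Or.inr (Or.inl ⟨h1, h2, h3, h5, h0, w1, w2, w3⟩))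
  · have hne : m ≠ f.2 := (ne_of_lt hum).symm
    have h5 : r m f.2 := (hT.2 m f.2 hne).2 h3
    have h0 : rem (m, f.2) = 0 := by
      by_contra h0
      have := hmin (m, f.2) h5 hum (Nat.pos_of_ne_zero h0)
      simp only at this
      have e1 := (Fin.lt_def).1 hum
      have e2 := (Fin.lt_def).1 hmv
      omega
    obtain ⟨w1, w2, w3, w4⟩ := hW1 (m, f.2) h5 hum h0
    exact Or.inr (Or.inr (Or.inr ⟨h1, h2, h3, h5, h0, w1, w2, w4⟩))

end Stmt13Aux
namespace Stmt13Aux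
variable {n : ℕ} (r : Fin n → Fin n → Prop) [DecidableRel r]

lemma core
    (hT : (∀ v, ¬ r v v) ∧ ∀ u v : Fin n, u ≠ v → (r u v ↔ ¬ r v u))
    (rem : Fin n × Fin n → ℕ) (K : Finset (Fin n × Fin n)) (mh : Fin n × Fin n → Fin n)
    (hKord : ∀ k ∈ K, k.1 < k.2)
    (hINV : ∀ a b : Fin n, (a : ℕ) ≤ (b : ℕ) → SS r rem K a b + (a : ℕ) ≤ (b : ℕ))
    (hW1 : ∀ p : Fin n × Fin n, r p.1 p.2 → p.2 < p.1 → rem p = 0 → W1 K mh p)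
    (hW2 : ∀ p q : Fin n × Fin n, r p.1 p.2 → p.2 < p.1 → r q.1 q.2 → q.2 < q.1 →
      rem p = 0 → rem q = 0 → p ≠ q → W2 mh p q)
    (f : Fin n × Fin n) (hfb : r f.1 f.2) (hflt : f.2 < f.1) (hfpos : 0 < rem f)
    (hmin : ∀ p : Fin n × Fin n, r p.1 p.2 → p.2 < p.1 → 0 < rem p →
      (f.1 : ℕ) - (f.2 : ℕ) ≤ (p.1 : ℕ) - (p.2 : ℕ)) :
    ∃ m : Fin n, f.2 < m ∧ m < f.1 ∧ r f.2 m ∧ r m f.1 ∧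
      (f.2, m) ∉ K ∧ (m, f.1) ∉ K ∧
      (∀ a b : Fin n, a ≤ f.2 → m ≤ b → b < f.1 →
        SS r rem K a b + (a : ℕ) + 1 ≤ (b : ℕ)) ∧
      (∀ a b : Fin n, f.2 < a → a ≤ m → f.1 ≤ b →
        SS r rem K a b + (a : ℕ) + 1 ≤ (b : ℕ)) := by
  classical
  obtain ⟨a₀, β, ha₀t, htβ, hβh, hLtight, hLmax⟩ := Lwit r rem K hKord hINV f.2 f.1 hflt
  obtain ⟨α, b₀, hhb₀, hαh, htα, hRtight, hRmax⟩ := Rwit r rem K hKord hINV f.2 f.1 hflt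
  have hβα : (β : ℕ) < (α : ℕ) :=
    beta_lt_alpha r rem K hINV f hfb hflt hfpos a₀ β α b₀ ha₀t htβ hβh hhb₀ hαh htα
      hLtight hRtight
  have eβh : (β : ℕ) < (f.1 : ℕ) := (Fin.lt_def).1 hβh
  have etβ : (f.2 : ℕ) ≤ (β : ℕ) := (Fin.le_def).1 htβ
  have etα : (f.2 : ℕ) < (α : ℕ) := (Fin.lt_def).1 htα
  have eαh : (α : ℕ) ≤ (f.1 : ℕ) := (Fin.le_def).1 hαh
  have ea₀ : (a₀ : ℕ) ≤ (f.2 : ℕ) := (Fin.le_def).1 ha₀t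
  have eb₀ : (f.1 : ℕ) ≤ (b₀ : ℕ) := (Fin.le_def).1 hhb₀
  have etv : (f.2 : ℕ) < (f.1 : ℕ) := (Fin.lt_def).1 hflt
  obtain ⟨hsums, hkdisj, hksub⟩ :=
    count_parts r rem K hKord f hfb hflt a₀ β α b₀ ha₀t eβh hβα etα hhb₀
  set Good : Fin n → Prop :=
    fun m => r f.2 m ∧ r m f.1 ∧ (f.2, m) ∉ K ∧ (m, f.1) ∉ K with hGood
  set NG := (Finset.Ioo β α).filter (fun m => ¬ Good m) with hNGdef
  set GD := (Finset.Ioo β α).filter (fun m => Good m) with hGDdef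
  set Φ : Fin n → Fin n × Fin n := fun m =>
    if (f.2, m) ∈ K then (f.2, m)
    else if (m, f.1) ∈ K then (m, f.1)
    else if r f.2 m then (m, mh (f.1, m))
    else (mh (m, f.2), m) with hΦdef
  set T := (kIn K a₀ b₀) \ (kIn K a₀ β ∪ kIn K α b₀) with hTdef
  -- facts about window elements
  have hwinfact : ∀ m ∈ NG, (β : ℕ) < (m : ℕ) ∧ (m : ℕ) < (α : ℕ) ∧
      f.2 < m ∧ m < f.1 ∧ ¬ Good m := by
    intro m hm
    rw [hNGdef, Finset.mem_filter, Finset.mem_Ioo] at hm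
    obtain ⟨⟨h1, h2⟩, h3⟩ := hm
    have e1 := (Fin.lt_def).1 h1
    have e2 := (Fin.lt_def).1 h2
    exact ⟨e1, e2, (Fin.lt_def).2 (by omega), (Fin.lt_def).2 (by omega), h3⟩
  -- per-case description of Φ on NG
  have hcase : ∀ m ∈ NG,
      (Φ m = (f.2, m) ∧ (f.2, m) ∈ K) ∨
      (Φ m = (m, f.1) ∧ (m, f.1) ∈ K) ∨
      (Φ m = (m, mh (f.1, m)) ∧ r f.1 m ∧ rem (f.1, m) = 0 ∧
        (m : ℕ) < (mh (f.1, m) : ℕ) ∧ ((mh (f.1, m)) : ℕ) < (f.1 : ℕ) ∧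
        (m, mh (f.1, m)) ∈ K) ∨
      (Φ m = (mh (m, f.2), m) ∧ r m f.2 ∧ rem (m, f.2) = 0 ∧
        (f.2 : ℕ) < (mh (m, f.2) : ℕ) ∧ ((mh (m, f.2)) : ℕ) < (m : ℕ) ∧
        (mh (m, f.2), m) ∈ K) := by
    intro m hm
    obtain ⟨em1, em2, hum, hmv, hng⟩ := hwinfact m hm
    rcases charge_cases r hT rem K mh hW1 f hflt hmin m hum hmv (by
      rw [hGood] at hng; exact hng) with h | ⟨h1, h2⟩ | ⟨h1, h2, h3, h5, h0, w1, w2, w3⟩ |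
        ⟨h1, h2, h3, h5, h0, w1, w2, w4⟩
    · exact Or.inl ⟨by simp [hΦdef, h], h⟩
    · exact Or.inr (Or.inl ⟨by simp [hΦdef, h1, h2], h2⟩)
    · refine Or.inr (Or.inr (Or.inl ⟨by simp [hΦdef, h1, h2, h3], h5, h0,
        (Fin.lt_def).1 w1, (Fin.lt_def).1 w2, w3⟩))
    · refine Or.inr (Or.inr (Or.inr ⟨by simp [hΦdef, h1, h2, h3], h5, h0,
        (Fin.lt_def).1 w1, (Fin.lt_def).1 w2, w4⟩))
  -- Φ maps NG into T
  have hmapsto : ∀ m ∈ NG, Φ m ∈ T := by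
    intro m hm
    obtain ⟨em1, em2, hum, hmv, -⟩ := hwinfact m hm
    have emu : (f.2 : ℕ) < (m : ℕ) := (Fin.lt_def).1 hum
    have emv : (m : ℕ) < (f.1 : ℕ) := (Fin.lt_def).1 hmv
    have hmemT : ∀ x y : Fin n, (x, y) ∈ K → (a₀ : ℕ) ≤ (x : ℕ) → (y : ℕ) ≤ (b₀ : ℕ) →
        (¬ ((y : ℕ) ≤ (β : ℕ)) ∨ ¬ ((a₀ : ℕ) ≤ (x : ℕ))) →
        ¬ ((α : ℕ) ≤ (x : ℕ)) → (x, y) ∈ T := by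
      intro x y hk hk1 hk2 hnot1 hnot2
      rw [hTdef, Finset.mem_sdiff]
      constructor
      · rw [mem_kIn]
        exact ⟨hk, (Fin.le_def).2 hk1, (Fin.le_def).2 hk2⟩
      · intro hk'
        rcases Finset.mem_union.1 hk' with hk' | hk' <;> rw [mem_kIn] at hk'
        · rcases hnot1 with hn | hn
          · exact hn ((Fin.le_def).1 hk'.2.2)
          · exact hn ((Fin.le_def).1 hk'.2.1)
        · exact hnot2 ((Fin.le_def).1 hk'.2.1)
    rcases hcase m hm with ⟨hΦ, hK⟩ | ⟨hΦ, hK⟩ | ⟨hΦ, -, -, w1, w2, hK⟩ | ⟨hΦ, -, -, w1, w2, hK⟩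
    · rw [hΦ]
      refine hmemT f.2 m hK (by omega) (by omega) (Or.inl (by omega)) (by omega)
    · rw [hΦ]
      refine hmemT m f.1 hK (by omega) (by omega) (Or.inl (by omega)) (by omega)
    · rw [hΦ]
      refine hmemT m (mh (f.1, m)) hK (by omega) (by omega) (Or.inl (by omega)) (by omega)
    · rw [hΦ]
      refine hmemT (mh (m, f.2)) m hK (by omega) (by omega) (Or.inl (by omega)) (by omega)
  -- injectivity of Φ on NG
  have hinj : ∀ m₁ ∈ NG, ∀ m₂ ∈ NG, Φ m₁ = Φ m₂ → m₁ = m₂ := by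
    intro m₁ hm₁ m₂ hm₂ heq
    obtain ⟨e11, e12, hu1, hv1, -⟩ := hwinfact m₁ hm₁
    obtain ⟨e21, e22, hu2, hv2, -⟩ := hwinfact m₂ hm₂
    have eu1 : (f.2 : ℕ) < (m₁ : ℕ) := (Fin.lt_def).1 hu1
    have ev1 : (m₁ : ℕ) < (f.1 : ℕ) := (Fin.lt_def).1 hv1
    have eu2 : (f.2 : ℕ) < (m₂ : ℕ) := (Fin.lt_def).1 hu2
    have ev2 : (m₂ : ℕ) < (f.1 : ℕ) := (Fin.lt_def).1 hv2
    rcases hcase m₁ hm₁ with ⟨hΦ1, hK1⟩ | ⟨hΦ1, hK1⟩ | ⟨hΦ1, hb1, h01, w11, w12, hK1⟩ |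
        ⟨hΦ1, hb1, h01, w11, w12, hK1⟩ <;>
      rcases hcase m₂ hm₂ with ⟨hΦ2, hK2⟩ | ⟨hΦ2, hK2⟩ | ⟨hΦ2, hb2, h02, w21, w22, hK2⟩ |
        ⟨hΦ2, hb2, h02, w21, w22, hK2⟩ <;>
      rw [hΦ1, hΦ2, Prod.mk.injEq] at heq <;>
      obtain ⟨hx, hy⟩ := heq
    -- 16 cases
    · exact hy  -- C1 C1
    · exact absurd (congrArg Fin.val hx) (by omega)  -- C1 C2 : f.2 = m₂
    · exact absurd (congrArg Fin.val hx) (by omega)  -- C1 C3 : f.2 = m₂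
    · exact hy  -- C1 C4
    · exact absurd (congrArg Fin.val hx) (by omega)  -- C2 C1 : m₁ = f.2
    · exact hx  -- C2 C2
    · exact hx  -- C2 C3
    · exact absurd (congrArg Fin.val hy) (by omega)  -- C2 C4 : f.1 = m₂
    · exact absurd (congrArg Fin.val hx) (by omega)  -- C3 C1 : m₁ = f.2
    · exact hx  -- C3 C2
    · exact hx  -- C3 C3
    · -- C3 C4 : (m₁, mh (f.1,m₁)) = (mh (m₂,f.2), m₂) : use W2
      exfalso
      have hp : r (f.1, m₁).1 (f.1, m₁).2 := hb1
      have hq : r (m₂, f.2).1 (m₂, f.2).2 := hb2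
      have hne : (f.1, m₁) ≠ (m₂, f.2) := by
        intro hcon
        have := congrArg (fun z : Fin n × Fin n => (z.1 : ℕ)) hcon
        simp at this; omega
      have hw2 := hW2 (f.1, m₁) (m₂, f.2) hp hv1 hq hu2 h01 h02 hne
      exact hw2.2.1 (by simp only; rw [Prod.mk.injEq]; exact ⟨hx, hy⟩)
    · exact hy  -- C4 C1
    · exact absurd (congrArg Fin.val hy) (by omega)  -- C4 C2 : m₁ = f.1
    · -- C4 C3 : symmetric W2
      exfalso
      have hne : (f.1, m₂) ≠ (m₁, f.2) := by
        intro hcon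
        have := congrArg (fun z : Fin n × Fin n => (z.1 : ℕ)) hcon
        simp at this; omega
      have hw2 := hW2 (f.1, m₂) (m₁, f.2) hb2 hv2 hb1 hu1 h02 h01 hne
      exact hw2.2.1 (by simp only; rw [Prod.mk.injEq]; exact ⟨hx.symm, hy.symm⟩)
    · exact hy  -- C4 C4
  -- cardinal chain
  have hcard1 : NG.card ≤ T.card :=
    Finset.card_le_card_of_injOn Φ hmapsto (fun x hx y hy => hinj x hx y hy)
  have hTcard : T.card + (kIn K a₀ β ∪ kIn K α b₀).card = (kIn K a₀ b₀).card := by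
    rw [hTdef]
    exact Finset.card_sdiff_add_card_eq_card hksub
  have hk12 : (kIn K a₀ β ∪ kIn K α b₀).card = (kIn K a₀ β).card + (kIn K α b₀).card :=
    Finset.card_union_of_disjoint hkdisj
  have hJinv := hINV a₀ b₀ (by omega)
  have hwin : (Finset.Ioo β α).card = (α : ℕ) - (β : ℕ) - 1 := Fin.card_Ioo β α
  have hsplit : GD.card + NG.card = (Finset.Ioo β α).card := by
    rw [hGDdef, hNGdef]
    exact Finset.card_filter_add_card_filter_not (p := Good)
  -- master inequality
  simp only [SS] at hJinv hLtight hRtight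
  have hGDpos : 0 < GD.card := by omega
  obtain ⟨m, hm⟩ := Finset.card_pos.1 hGDpos
  rw [hGDdef, Finset.mem_filter, Finset.mem_Ioo] at hm
  obtain ⟨⟨hβm, hmα⟩, hg1, hg2, hg3, hg4⟩ := hm
  have hum : f.2 < m := lt_of_le_of_lt htβ hβm
  have hmv : m < f.1 := lt_of_lt_of_le hmα hαh
  refine ⟨m, hum, hmv, hg1, hg2, hg3, hg4, ?_, ?_⟩
  · intro a b hat hmb hbv
    exact hLmax a b hat (lt_of_lt_of_le hum hmb) hbv (lt_of_lt_of_le hβm hmb)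
  · intro a b hta ham hvb
    exact hRmax a b hta (lt_of_le_of_lt ham hmv) (lt_of_le_of_lt ham hmα) hvb

end Stmt13Aux
namespace Stmt13Aux
variable {n : ℕ} (r : Fin n → Fin n → Prop) [DecidableRel r]

lemma main_rec
    (hT : (∀ v, ¬ r v v) ∧ ∀ u v : Fin n, u ≠ v → (r u v ↔ ¬ r v u)) :
    ∀ (T : ℕ) (rem : Fin n × Fin n → ℕ) (K : Finset (Fin n × Fin n))
      (mh : Fin n × Fin n → Fin n),
    (∑ p ∈ Finset.univ.filter (fun p : Fin n × Fin n => r p.1 p.2 ∧ p.2 < p.1), rem p) = T →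
    (∀ k ∈ K, k.1 < k.2) →
    (∀ a b : Fin n, (a : ℕ) ≤ (b : ℕ) → SS r rem K a b + (a : ℕ) ≤ (b : ℕ)) →
    (∀ p : Fin n × Fin n, r p.1 p.2 → p.2 < p.1 → rem p = 0 → W1 K mh p) →
    (∀ p q : Fin n × Fin n, r p.1 p.2 → p.2 < p.1 → r q.1 q.2 → q.2 < q.1 →
      rem p = 0 → rem q = 0 → p ≠ q → W2 mh p q) →
    ∃ M : Fin n × Fin n → ℕ → Fin n,
      (∀ p : Fin n × Fin n, r p.1 p.2 → p.2 < p.1 → ∀ i < rem p,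
        p.2 < M p i ∧ M p i < p.1 ∧ r p.2 (M p i) ∧ r (M p i) p.1 ∧
        (p.2, M p i) ∉ K ∧ (M p i, p.1) ∉ K) ∧
      (∀ p : Fin n × Fin n, r p.1 p.2 → p.2 < p.1 → ∀ i < rem p,
        ∀ q : Fin n × Fin n, r q.1 q.2 → q.2 < q.1 → ∀ j < rem q, (p, i) ≠ (q, j) →
        (p.2, M p i) ≠ (q.2, M q j) ∧ (p.2, M p i) ≠ (M q j, q.1) ∧
        (M p i, p.1) ≠ (q.2, M q j) ∧ (M p i, p.1) ≠ (M q j, q.1)) := by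
  intro T
  induction T with
  | zero =>
    intro rem K mh hsum hKord hINV hW1 hW2
    refine ⟨fun p _ => p.1, ?_, ?_⟩ <;> intro p hpb hplt i hi
    · exfalso
      have hp0 : rem p = 0 := by
        have := (Finset.sum_eq_zero_iff.1 hsum) p (by
          simp only [Finset.mem_filter, Finset.mem_univ, true_and]
          exact ⟨hpb, hplt⟩)
        exact this
      omega
    · exfalso
      have hp0 : rem p = 0 := by
        have := (Finset.sum_eq_zero_iff.1 hsum) p (by
          simp only [Finset.mem_filter, Finset.mem_univ, true_and]
          exact ⟨hpb, hplt⟩)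
        exact this
      omega
  | succ T ih =>
    intro rem K mh hsum hKord hINV hW1 hW2
    -- choose a positive pair of minimal span
    have hne : (Finset.univ.filter
        (fun p : Fin n × Fin n => (r p.1 p.2 ∧ p.2 < p.1) ∧ 0 < rem p)).Nonempty := by
      by_contra hcon
      rw [Finset.not_nonempty_iff_eq_empty] at hcon
      have hz : ∀ p ∈ Finset.univ.filter
          (fun p : Fin n × Fin n => r p.1 p.2 ∧ p.2 < p.1), rem p = 0 := by
        intro p hp
        rw [Finset.mem_filter] at hp
        by_contra hpz
        have : p ∈ Finset.univ.filter
            (fun p : Fin n × Fin n => (r p.1 p.2 ∧ p.2 < p.1) ∧ 0 < rem p) := by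
          rw [Finset.mem_filter]
          exact ⟨Finset.mem_univ _, hp.2, Nat.pos_of_ne_zero hpz⟩
        rw [hcon] at this
        exact absurd this (Finset.notMem_empty _)
      rw [Finset.sum_eq_zero hz] at hsum
      omega
    obtain ⟨f, hfmem, hfmin⟩ := Finset.exists_min_image _
      (fun p : Fin n × Fin n => (p.1 : ℕ) - (p.2 : ℕ)) hne
    rw [Finset.mem_filter] at hfmem
    obtain ⟨-, ⟨hfb, hflt⟩, hfpos⟩ := hfmem
    have hmin : ∀ p : Fin n × Fin n, r p.1 p.2 → p.2 < p.1 → 0 < rem p →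
        (f.1 : ℕ) - (f.2 : ℕ) ≤ (p.1 : ℕ) - (p.2 : ℕ) := by
      intro p h1 h2 h3
      exact hfmin p (by rw [Finset.mem_filter]; exact ⟨Finset.mem_univ _, ⟨h1, h2⟩, h3⟩)
    obtain ⟨m, hm1, hm2, hm3, hm4, hm5, hm6, hsafeL, hsafeR⟩ :=
      core r hT rem K mh hKord hINV hW1 hW2 f hfb hflt hfpos hmin
    have hAB : ((f.2 : Fin n), m) ≠ (m, f.1) := by
      intro hcon
      have := congrArg (fun z : Fin n × Fin n => (z.1 : ℕ)) hcon
      simp only at this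
      have := (Fin.lt_def).1 hm1
      omega
    set A : Fin n × Fin n := (f.2, m) with hA
    set B : Fin n × Fin n := (m, f.1) with hB
    set K' : Finset (Fin n × Fin n) := insert A (insert B K) with hK'
    set rem' : Fin n × Fin n → ℕ := Function.update rem f (rem f - 1) with hrem'
    set mh' : Fin n × Fin n → Fin n := Function.update mh f m with hmh'
    have hKsub : K ⊆ K' := by
      intro k hk; rw [hK']
      exact Finset.mem_insert_of_mem (Finset.mem_insert_of_mem hk)
    have hAK' : A ∈ K' := Finset.mem_insert_self _ _
    have hBK' : B ∈ K' := Finset.mem_insert_of_mem (Finset.mem_insert_self _ _)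
    have hmemK' : ∀ k, k ∈ K' ↔ k = A ∨ k = B ∨ k ∈ K := by
      intro k; rw [hK']; simp [Finset.mem_insert]
    -- sum decreases
    have hfBwd : f ∈ Finset.univ.filter
        (fun p : Fin n × Fin n => r p.1 p.2 ∧ p.2 < p.1) := by
      rw [Finset.mem_filter]; exact ⟨Finset.mem_univ _, hfb, hflt⟩
    have hsum' : (∑ p ∈ Finset.univ.filter
        (fun p : Fin n × Fin n => r p.1 p.2 ∧ p.2 < p.1), rem' p) = T := by
      rw [hrem', Finset.sum_update_of_mem hfBwd]
      rw [Finset.sum_eq_sum_sdiff_singleton_add hfBwd] at hsum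
      omega
    have hKord' : ∀ k ∈ K', k.1 < k.2 := by
      intro k hk
      rcases (hmemK' k).1 hk with hk | hk | hk
      · subst hk; exact hm1
      · subst hk; exact hm2
      · exact hKord k hk
    -- the sums over bwdIn with rem' and cards over kIn with K'
    have hbwd_update : ∀ a b : Fin n, f ∉ bwdIn r a b →
        ∑ p ∈ bwdIn r a b, rem' p = ∑ p ∈ bwdIn r a b, rem p := by
      intro a b hf
      apply Finset.sum_congr rfl
      intro p hp
      rw [hrem']
      exact Function.update_of_ne (fun hc => hf (by rw [← hc]; exact hp)) _ _
    have hbwd_update' : ∀ a b : Fin n, f ∈ bwdIn r a b →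
        ∑ p ∈ bwdIn r a b, rem' p + 1 = ∑ p ∈ bwdIn r a b, rem p := by
      intro a b hf
      rw [hrem', Finset.sum_update_of_mem hf]
      rw [Finset.sum_eq_sum_sdiff_singleton_add hf (f := rem)]
      omega
    have hABnotmem : A ∉ insert B K := by
      rw [Finset.mem_insert]
      rintro (hc | hc)
      · exact hAB hc
      · exact hm5 hc
    have hkIn_card : ∀ a b : Fin n,
        (kIn K' a b).card =
          (kIn K a b).card + (if a ≤ A.1 ∧ A.2 ≤ b then 1 else 0)
            + (if a ≤ B.1 ∧ B.2 ≤ b then 1 else 0) := by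
      intro a b
      have eA : kIn K' a b = if (a ≤ A.1 ∧ A.2 ≤ b) then insert A (kIn (insert B K) a b)
          else kIn (insert B K) a b := by
        simp only [hK', kIn, Finset.filter_insert]
      have eB : kIn (insert B K) a b = if (a ≤ B.1 ∧ B.2 ≤ b) then insert B (kIn K a b)
          else kIn K a b := by
        simp only [kIn, Finset.filter_insert]
      have hAnot : A ∉ kIn (insert B K) a b := by
        intro hc; exact hABnotmem ((mem_kIn).1 hc).1
      have hBnot : B ∉ kIn K a b := by
        intro hc; exact hm6 ((mem_kIn).1 hc).1
      by_cases h1 : a ≤ A.1 ∧ A.2 ≤ b <;> by_cases h2 : a ≤ B.1 ∧ B.2 ≤ b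
      · rw [eA, if_pos h1, if_pos h1, if_pos h2, Finset.card_insert_of_notMem hAnot,
          eB, if_pos h2, Finset.card_insert_of_notMem hBnot]
      · rw [eA, if_pos h1, if_pos h1, if_neg h2, Finset.card_insert_of_notMem hAnot,
          eB, if_neg h2]
      · rw [eA, if_neg h1, if_neg h1, if_pos h2, eB, if_pos h2,
          Finset.card_insert_of_notMem hBnot]
      · rw [eA, if_neg h1, if_neg h1, if_neg h2, eB, if_neg h2]
        omega
    have hINV' : ∀ a b : Fin n, (a : ℕ) ≤ (b : ℕ) →
        SS r rem' K' a b + (a : ℕ) ≤ (b : ℕ) := by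
      intro a b hab
      by_cases hin : a ≤ f.2 ∧ f.1 ≤ b
      · -- f inside: balance
        have hfmem2 : f ∈ bwdIn r a b := by
          rw [mem_bwdIn]; exact ⟨hfb, hflt, hin.1, hin.2⟩
        have h1 : a ≤ A.1 ∧ A.2 ≤ b := ⟨hin.1, le_trans (le_of_lt hm2) hin.2⟩
        have h2 : a ≤ B.1 ∧ B.2 ≤ b := ⟨le_trans hin.1 (le_of_lt hm1), hin.2⟩
        have e1 := hbwd_update' a b hfmem2
        have e2 := hkIn_card a b
        have e3 := hINV a b hab
        simp only [SS] at e3 ⊢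
        rw [if_pos h1, if_pos h2] at e2
        omega
      · have hfnot : f ∉ bwdIn r a b := by
          intro hc; rw [mem_bwdIn] at hc
          exact hin ⟨hc.2.2.1, hc.2.2.2⟩
        have e1 := hbwd_update a b hfnot
        have e2 := hkIn_card a b
        by_cases h1 : a ≤ A.1 ∧ A.2 ≤ b
        · -- left pair inside, so b < f.1
          have hbv : b < f.1 := by
            by_contra hc
            exact hin ⟨h1.1, not_lt.1 hc⟩
          have h2 : ¬ (a ≤ B.1 ∧ B.2 ≤ b) := by
            rintro ⟨-, hc⟩
            exact absurd (lt_of_le_of_lt hc hbv) (lt_irrefl _)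
          have e3 := hsafeL a b h1.1 h1.2 hbv
          simp only [SS] at e3 ⊢
          rw [if_pos h1, if_neg h2] at e2
          omega
        · by_cases h2 : a ≤ B.1 ∧ B.2 ≤ b
          · have hta : f.2 < a := by
              by_contra hc
              exact hin ⟨not_lt.1 hc, h2.2⟩
            have e3 := hsafeR a b hta h2.1 h2.2
            simp only [SS] at e3 ⊢
            rw [if_neg h1, if_pos h2] at e2
            omega
          · have e3 := hINV a b hab
            simp only [SS] at e3 ⊢
            rw [if_neg h1, if_neg h2] at e2
            omega
    have hW1' : ∀ p : Fin n × Fin n, r p.1 p.2 → p.2 < p.1 → rem' p = 0 → W1 K' mh' p := by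
      intro p hpb hplt hp0
      by_cases hpf : p = f
      · subst hpf
        rw [hmh']
        unfold W1
        rw [Function.update_self]
        exact ⟨hm1, hm2, hAK', hBK'⟩
      · rw [hrem', Function.update_of_ne hpf] at hp0
        obtain ⟨w1, w2, w3, w4⟩ := hW1 p hpb hplt hp0
        rw [hmh']
        unfold W1
        rw [Function.update_of_ne hpf]
        exact ⟨w1, w2, hKsub w3, hKsub w4⟩
    have hW2' : ∀ p q : Fin n × Fin n, r p.1 p.2 → p.2 < p.1 → r q.1 q.2 → q.2 < q.1 →
        rem' p = 0 → rem' q = 0 → p ≠ q → W2 mh' p q := by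
      intro p q hpb hplt hqb hqlt hp0 hq0 hpq
      by_cases hpf : p = f <;> by_cases hqf : q = f
      · exact absurd (hpf.trans hqf.symm) hpq
      · subst hpf
        rw [hrem', Function.update_of_ne hqf] at hq0
        obtain ⟨w1, w2, w3, w4⟩ := hW1 q hqb hqlt hq0
        unfold W2
        rw [hmh', Function.update_self, Function.update_of_ne hqf]
        refine ⟨fun hc => hm5 ?_, fun hc => hm5 ?_, fun hc => hm6 ?_, fun hc => hm6 ?_⟩
        · rw [hA, hc]; exact w3
        · rw [hA, hc]; exact w4
        · rw [hB, hc]; exact w3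
        · rw [hB, hc]; exact w4
      · subst hqf
        rw [hrem', Function.update_of_ne hpf] at hp0
        obtain ⟨w1, w2, w3, w4⟩ := hW1 p hpb hplt hp0
        unfold W2
        rw [hmh', Function.update_self, Function.update_of_ne hpf]
        refine ⟨fun hc => hm5 ?_, fun hc => hm6 ?_, fun hc => hm5 ?_, fun hc => hm6 ?_⟩
        · rw [hA, ← hc]; exact w3
        · rw [hB, ← hc]; exact w3
        · rw [hA, ← hc]; exact w4
        · rw [hB, ← hc]; exact w4
      · rw [hrem', Function.update_of_ne hpf] at hp0
        rw [hrem', Function.update_of_ne hqf] at hq0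
        have := hW2 p q hpb hplt hqb hqlt hp0 hq0 hpq
        unfold W2 at this ⊢
        rw [hmh', Function.update_of_ne hpf, Function.update_of_ne hqf]
        exact this
    obtain ⟨M, hM1, hM2⟩ := ih rem' K' mh' hsum' hKord' hINV' hW1' hW2'
    have hold : ∀ (p : Fin n × Fin n) (i : ℕ), i < rem p →
        ¬(p = f ∧ i = rem f - 1) → i < rem' p := by
      intro p i hi hnot
      rw [hrem']
      by_cases hpf : p = f
      · subst hpf
        rw [Function.update_self]
        by_cases hieq : i = rem p - 1
        · exact absurd ⟨rfl, hieq⟩ hnot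
        · omega
      · rw [Function.update_of_ne hpf]; exact hi
    set M' : Fin n × Fin n → ℕ → Fin n :=
      fun p i => if p = f ∧ i = rem f - 1 then m else M p i with hM'def
    have hM'val : ∀ (p : Fin n × Fin n) (i : ℕ),
        M' p i = if p = f ∧ i = rem f - 1 then m else M p i := fun _ _ => rfl
    refine ⟨M', ?_, ?_⟩
    · intro p hpb hplt i hi
      by_cases hnew : p = f ∧ i = rem f - 1
      · have hval : M' p i = m := by rw [hM'val]; exact if_pos hnew
        rw [hval]
        obtain ⟨hp1, -⟩ := hnew
        subst hp1
        exact ⟨hm1, hm2, hm3, hm4, hm5, hm6⟩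
      · have hval : M' p i = M p i := by rw [hM'val]; exact if_neg hnew
        rw [hval]
        obtain ⟨c1, c2, c3, c4, c5, c6⟩ := hM1 p hpb hplt i (hold p i hi hnew)
        exact ⟨c1, c2, c3, c4, fun hc => c5 (hKsub hc), fun hc => c6 (hKsub hc)⟩
    · intro p hpb hplt i hi q hqb hqlt j hj hne
      by_cases hp : p = f ∧ i = rem f - 1 <;> by_cases hq : q = f ∧ j = rem f - 1
      · exfalso
        obtain ⟨hp1, hp2⟩ := hp
        obtain ⟨hq1, hq2⟩ := hq
        exact hne (by rw [hp1, hq1, hp2, hq2])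
      · have hvp : M' p i = m := by rw [hM'val]; exact if_pos hp
        have hvq : M' q j = M q j := by rw [hM'val]; exact if_neg hq
        rw [hvp, hvq]
        obtain ⟨hp1, -⟩ := hp
        subst hp1
        obtain ⟨-, -, -, -, c5, c6⟩ := hM1 q hqb hqlt j (hold q j hj hq)
        exact ⟨fun hc => c5 (by rw [← hc]; exact hAK'),
          fun hc => c6 (by rw [← hc]; exact hAK'),
          fun hc => c5 (by rw [← hc]; exact hBK'),
          fun hc => c6 (by rw [← hc]; exact hBK')⟩
      · have hvq : M' q j = m := by rw [hM'val]; exact if_pos hq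
        have hvp : M' p i = M p i := by rw [hM'val]; exact if_neg hp
        rw [hvp, hvq]
        obtain ⟨hq1, -⟩ := hq
        subst hq1
        obtain ⟨-, -, -, -, c5, c6⟩ := hM1 p hpb hplt i (hold p i hi hp)
        exact ⟨fun hc => c5 (by rw [hc]; exact hAK'),
          fun hc => c5 (by rw [hc]; exact hBK'),
          fun hc => c6 (by rw [hc]; exact hAK'),
          fun hc => c6 (by rw [hc]; exact hBK')⟩
      · have hvp : M' p i = M p i := by rw [hM'val]; exact if_neg hp
        have hvq : M' q j = M q j := by rw [hM'val]; exact if_neg hq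
        rw [hvp, hvq]
        exact hM2 p hpb hplt i (hold p i hi hp) q hqb hqlt j (hold q j hj hq) hne

end Stmt13Aux

/-- If an ordered tournament has positive integer weights on its backward arcs with
`2·w(I) ≤ |I| - 1` for every interval `I`, then every backward arc `f = vu` can be
assigned `w(f)` directed paths from `u` to `v` of forward arcs within the span of `f`,
all paths over all backward arcs being pairwise arc-disjoint. -/
theorem stmt13 (n : ℕ) (r : Fin n → Fin n → Prop) [DecidableRel r]
    (hT : IsTournament r) (w : Fin n × Fin n → ℕ)
    (hw : ∀ e : Fin n × Fin n, r e.1 e.2 → e.2 < e.1 → 1 ≤ w e)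
    (hint : ∀ a b : Fin n, a ≤ b →
      2 * ∑ e ∈ Finset.univ.filter
            (fun e : Fin n × Fin n => r e.1 e.2 ∧ e.2 < e.1 ∧ a ≤ e.2 ∧ e.1 ≤ b), w e
        ≤ (b : ℕ) - (a : ℕ)) :
    ∃ P : Fin n × Fin n → ℕ → Set (Fin n × Fin n),
      (∀ f : Fin n × Fin n, r f.1 f.2 → f.2 < f.1 → ∀ i < w f,
        P f i ⊆ {e : Fin n × Fin n |
          r e.1 e.2 ∧ e.1 < e.2 ∧ f.2 ≤ e.1 ∧ e.2 ≤ f.1} ∧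
        Relation.ReflTransGen (fun x y => (x, y) ∈ P f i) f.2 f.1) ∧
      (∀ f g : Fin n × Fin n, r f.1 f.2 → f.2 < f.1 → r g.1 g.2 → g.2 < g.1 →
        ∀ i < w f, ∀ j < w g, (f, i) ≠ (g, j) → Disjoint (P f i) (P g j)) := by
  classical
  have hINV0 : ∀ a b : Fin n, (a : ℕ) ≤ (b : ℕ) →
      Stmt13Aux.SS r w ∅ a b + (a : ℕ) ≤ (b : ℕ) := by
    intro a b hab
    have h1 := hint a b ((Fin.le_def).2 hab)
    have h2 : (Stmt13Aux.kIn (∅ : Finset (Fin n × Fin n)) a b).card = 0 := by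
      simp [Stmt13Aux.kIn]
    unfold Stmt13Aux.SS Stmt13Aux.bwdIn
    rw [h2]
    omega
  have hW10 : ∀ p : Fin n × Fin n, r p.1 p.2 → p.2 < p.1 → w p = 0 →
      Stmt13Aux.W1 (∅ : Finset (Fin n × Fin n)) (fun p => p.1) p := by
    intro p h1 h2 h0
    have := hw p h1 h2
    omega
  have hW20 : ∀ p q : Fin n × Fin n, r p.1 p.2 → p.2 < p.1 → r q.1 q.2 → q.2 < q.1 →
      w p = 0 → w q = 0 → p ≠ q → Stmt13Aux.W2 (fun p : Fin n × Fin n => p.1) p q := by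
    intro p q h1 h2 h3 h4 h0 h0' h5
    have := hw p h1 h2
    omega
  obtain ⟨M, hM1, hM2⟩ := Stmt13Aux.main_rec r hT
    (∑ p ∈ Finset.univ.filter (fun p : Fin n × Fin n => r p.1 p.2 ∧ p.2 < p.1), w p)
    w ∅ (fun p => p.1) rfl (fun k hk => absurd hk (Finset.notMem_empty k))
    hINV0 hW10 hW20
  refine ⟨fun f i => {(f.2, M f i), (M f i, f.1)}, ?_, ?_⟩
  · intro f hfb hflt i hi
    obtain ⟨c1, c2, c3, c4, -, -⟩ := hM1 f hfb hflt i hi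
    constructor
    · intro e he
      simp only [Set.mem_insert_iff, Set.mem_singleton_iff] at he
      rcases he with he | he <;> subst he
      · exact ⟨c3, c1, le_refl _, le_of_lt c2⟩
      · exact ⟨c4, c2, le_of_lt c1, le_refl _⟩
    · have hA : ((f.2, M f i) : Fin n × Fin n) ∈
          ({(f.2, M f i), (M f i, f.1)} : Set (Fin n × Fin n)) := Set.mem_insert _ _
      have hB : ((M f i, f.1) : Fin n × Fin n) ∈
          ({(f.2, M f i), (M f i, f.1)} : Set (Fin n × Fin n)) :=
        Set.mem_insert_of_mem _ rfl
      exact Relation.ReflTransGen.tail (Relation.ReflTransGen.single hA) hB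
  · intro f g hfb hflt hgb hglt i hi j hj hne
    obtain ⟨d1, d2, d3, d4⟩ := hM2 f hfb hflt i hi g hgb hglt j hj hne
    rw [Set.disjoint_left]
    intro x hx hx'
    simp only [Set.mem_insert_iff, Set.mem_singleton_iff] at hx hx'
    rcases hx with hx | hx <;> rcases hx' with hx' | hx' <;> subst hx
    · exact d1 hx'
    · exact d2 hx'
    · exact d3 hx'
    · exact d4 hx'
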